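/- Every odd wheel is cycle-extendable; that is, for every k ≥ 1, the graph obtained from an odd cycle u_0 u_1 … u_{2k} (the rim) by adding a new vertex h (the hub) adjacent to every rim vertex is a matching covered graph in which every even cycle is conformal. -/

import Mathlib

open SimpleGraph

variable {V : Type*}

/-- A matching covered graph: a connected graph with at least two vertices in which
every edge belongs to some perfect matching. -/
def MatchingCovered (G : SimpleGraph V) : Prop :=
  G.Connected ∧ Nontrivial V ∧
    ∀ e ∈ G.edgeSet, ∃ M : G.Subgraph, M.IsPerfectMatching ∧ e ∈ M.edgeSet

/-- A cycle `C` is conformal if `G - V(C)` has a perfect matching. -/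
def ConformalCycle (G : SimpleGraph V) {u : V} (C : G.Walk u u) : Prop :=
  ∃ M : G.Subgraph, M.IsMatching ∧ M.verts = {w | w ∉ C.support}

/-- A matching covered graph is cycle-extendable if each of its even cycles is conformal. -/
def CycleExtendable (G : SimpleGraph V) : Prop :=
  ∀ ⦃u : V⦄ (C : G.Walk u u), C.IsCycle → Even C.length → ConformalCycle G C
/-- The odd wheel `W_{2k+1}`: an odd cycle `u_0 u_1 … u_{2k}` (the rim, with vertices
`some i`) together with a hub (the vertex `none`) joined to every rim vertex. -/
def oddWheel (k : ℕ) : SimpleGraph (Option (ZMod (2 * k + 1))) where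
  Adj a b :=
    (a = none ∧ b ≠ none) ∨ (b = none ∧ a ≠ none) ∨
    (∃ i j : ZMod (2 * k + 1), a = some i ∧ b = some j ∧ i ≠ j ∧ (i - j = 1 ∨ j - i = 1))
  symm := by
    constructor
    rintro a b (⟨h1, h2⟩ | ⟨h1, h2⟩ | ⟨i, j, h1, h2, h3, h4⟩)
    · exact Or.inr (Or.inl ⟨h1, h2⟩)
    · exact Or.inl ⟨h1, h2⟩
    · exact Or.inr (Or.inr ⟨j, i, h2, h1, h3.symm, h4.symm⟩)
  loopless := by
    constructor
    rintro a (⟨h1, h2⟩ | ⟨h1, h2⟩ | ⟨i, j, h1, h2, h3, h4⟩)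
    · exact h2 h1
    · exact h2 h1
    · rw [h1] at h2; exact h3 (Option.some_injective _ h2.symm).symm

/-- The odd prism: two disjoint odd cycles `w_0 w_1 … w_{2k}` (vertices `(false, i)`) and
`z_0 z_1 … z_{2k}` (vertices `(true, i)`) together with the rungs `w_i z_i`. -/
def oddPrism (k : ℕ) : SimpleGraph (Bool × ZMod (2 * k + 1)) where
  Adj a b :=
    (a.1 = b.1 ∧ a.2 ≠ b.2 ∧ (a.2 - b.2 = 1 ∨ b.2 - a.2 = 1)) ∨ (a.1 ≠ b.1 ∧ a.2 = b.2)
  symm := by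
    constructor
    rintro a b (⟨h1, h2, h3⟩ | ⟨h1, h2⟩)
    · exact Or.inl ⟨h1.symm, h2.symm, h3.symm⟩
    · exact Or.inr ⟨h1.symm, h2.symm⟩
  loopless := by
    constructor
    rintro a (⟨h1, h2, h3⟩ | ⟨h1, h2⟩)
    · exact h2 rfl
    · exact h1 rfl



section AuxHelpers

variable {W : Type*}

private lemma matching_of_involution (G : SimpleGraph W) (S : Set W) (f : W → W)
    (hmem : ∀ v ∈ S, f v ∈ S) (hinv : ∀ v ∈ S, f (f v) = v)
    (hadj : ∀ v ∈ S, G.Adj v (f v)) :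
    ∃ M : G.Subgraph, M.IsMatching ∧ M.verts = S ∧ ∀ v ∈ S, M.Adj v (f v) := by
  refine ⟨⟨S, fun x y => (x ∈ S ∧ y = f x) ∨ (y ∈ S ∧ x = f y), ?_, ?_, ?_⟩, ?_, rfl, ?_⟩
  · rintro x y (⟨hx, rfl⟩ | ⟨hy, rfl⟩)
    · exact hadj x hx
    · exact (hadj y hy).symm
  · rintro x y (⟨hx, rfl⟩ | ⟨hy, rfl⟩)
    · exact hx
    · exact hmem y hy
  · constructor
    rintro x y (⟨hx, rfl⟩ | ⟨hy, rfl⟩)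
    · exact Or.inr ⟨hx, rfl⟩
    · exact Or.inl ⟨hy, rfl⟩
  · intro v hv
    refine ⟨f v, Or.inl ⟨hv, rfl⟩, ?_⟩
    rintro w (⟨hv', rfl⟩ | ⟨hw, rfl⟩)
    · rfl
    · exact (hinv w hw).symm
  · intro v hv
    exact Or.inl ⟨hv, rfl⟩

end AuxHelpers

section ZModHelpers

private lemma zmod_rep {n : ℕ} [NeZero n] {ε : ZMod n} (hε : ε = 1 ∨ ε = -1) (b i : ZMod n) :
    i = b + ε * (((ε * (i - b)).val : ℕ) : ZMod n) := by
  have h2 : ε * ε = 1 := by rcases hε with rfl | rfl <;> ring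
  rw [ZMod.natCast_rightInverse _, ← mul_assoc, h2, one_mul, add_sub_cancel]

private lemma zmod_idx {n : ℕ} [NeZero n] {ε : ZMod n} (hε : ε = 1 ∨ ε = -1) (b : ZMod n)
    (j : ℕ) (hj : j < n) : (ε * ((b + ε * (j : ZMod n)) - b)).val = j := by
  have h2 : ε * ε = 1 := by rcases hε with rfl | rfl <;> ring
  rw [add_sub_cancel_left, ← mul_assoc, h2, one_mul, ZMod.val_cast_of_lt hj]

private lemma zmod_idx_inj {n : ℕ} [NeZero n] {ε : ZMod n} (hε : ε = 1 ∨ ε = -1) (b : ZMod n)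
    {j1 j2 : ℕ} (h1 : j1 < n) (h2 : j2 < n)
    (h : b + ε * (j1 : ZMod n) = b + ε * (j2 : ZMod n)) : j1 = j2 := by
  calc j1 = (ε * ((b + ε * (j1 : ZMod n)) - b)).val := (zmod_idx hε b j1 h1).symm
    _ = (ε * ((b + ε * (j2 : ZMod n)) - b)).val := by rw [h]
    _ = j2 := zmod_idx hε b j2 h2

end ZModHelpers

section WheelHelpers

private lemma oddWheel_adj_hub (k : ℕ) (i : ZMod (2 * k + 1)) :
    (oddWheel k).Adj none (some i) :=
  Or.inl ⟨rfl, by simp⟩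

private lemma oddWheel_adj_step (k : ℕ) (hk : 1 ≤ k) (i : ZMod (2 * k + 1))
    {ε : ZMod (2 * k + 1)} (hε : ε = 1 ∨ ε = -1) :
    (oddWheel k).Adj (some i) (some (i + ε)) := by
  haveI : Fact (1 < 2 * k + 1) := ⟨by omega⟩
  have hε0 : ε ≠ 0 := by
    rcases hε with rfl | rfl
    · exact one_ne_zero
    · exact neg_ne_zero.mpr one_ne_zero
  refine Or.inr (Or.inr ⟨i, i + ε, rfl, rfl, ?_, ?_⟩)
  · intro h
    exact hε0 (left_eq_add.mp h)
  · rcases hε with rfl | rfl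
    · right; rw [add_sub_cancel_left]
    · left; rw [sub_eq_iff_eq_add]; ring

end WheelHelpers

section RimPath

private lemma rim_path_len (k : ℕ) {u v : Option (ZMod (2 * k + 1))}
    (p : (oddWheel k).Walk u v) (hp : p.IsPath) (hn : none ∉ p.support) :
    p.length ≤ 2 * k := by
  have hnd : (none :: p.support).Nodup := List.nodup_cons.mpr ⟨hn, hp.support_nodup⟩
  have hle := hnd.length_le_card
  have hcard : Fintype.card (Option (ZMod (2 * k + 1))) = 2 * k + 2 := by
    rw [Fintype.card_option, ZMod.card]
  rw [List.length_cons, Walk.length_support, hcard] at hle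
  omega

private lemma rim_path_support (k : ℕ) :
    ∀ {u v : Option (ZMod (2 * k + 1))} (p : (oddWheel k).Walk u v),
    p.IsPath → none ∉ p.support → ∀ {a b : ZMod (2 * k + 1)}, u = some a → v = some b →
    ∃ ε : ZMod (2 * k + 1), (ε = 1 ∨ ε = -1) ∧ b = a + ε * (p.length : ZMod (2 * k + 1)) ∧
      (∀ w, w ∈ p.support ↔ ∃ j : ℕ, j ≤ p.length ∧ w = some (a + ε * (j : ZMod (2 * k + 1)))) := by
  intro u v p
  induction p with
  | nil =>
    intro _ _ a b ha hb
    subst ha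
    have hab : a = b := by injection hb
    subst hab
    refine ⟨1, Or.inl rfl, by simp, ?_⟩
    intro w
    simp only [Walk.support_nil, List.mem_singleton, Walk.length_nil]
    constructor
    · rintro rfl; exact ⟨0, le_refl 0, by simp⟩
    · rintro ⟨j, hj, rfl⟩
      have : j = 0 := by omega
      subst this
      simp
  | @cons u w v h q ih =>
    intro hp hn a b ha hb
    have hq : q.IsPath := hp.of_cons
    have hnq : none ∉ q.support := fun hx => hn (by simp [Walk.support_cons, hx])
    have hwn : w ≠ none := fun hw => hnq (hw ▸ q.start_mem_support)
    obtain ⟨c, hwc⟩ : ∃ c, w = some c := Option.ne_none_iff_exists'.mp hwn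
    -- adjacency facts
    have hadj := h
    rw [ha, hwc] at hadj
    rcases hadj with ⟨h1, _⟩ | ⟨h1, _⟩ | ⟨i, j, hi, hj, hne, hd⟩
    · exact absurd h1 (by simp)
    · exact absurd h1 (by simp)
    replace hi : a = i := by injection hi
    replace hj : c = j := by injection hj
    subst hi; subst hj
    have hd' : c - a = 1 ∨ c - a = -1 := by
      rcases hd with h' | h'
      · right; linear_combination -h'
      · left; exact h'
    obtain ⟨ε, hε, hb', hsup⟩ := ih hq hnq hwc hb
    have hnotu : u ∉ q.support := ((Walk.cons_isPath_iff h q).mp hp).2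
    have hc_eq : c = a + (c - a) := by ring
    rcases Nat.eq_zero_or_pos q.length with h0 | hpos
    · refine ⟨c - a, hd', ?_, ?_⟩
      · rw [h0] at hb'
        simp only [Walk.length_cons, h0]
        push_cast
        rw [mul_one]
        rw [hb']
        push_cast
        ring
      · intro x
        have hq0 : ∀ y, y ∈ q.support ↔ y = some c := by
          intro y
          rw [hsup y]
          constructor
          · rintro ⟨j, hj, rfl⟩
            rw [h0] at hj
            have : j = 0 := by omega
            subst this
            simp
          · rintro rfl
            exact ⟨0, by omega, by simp⟩
        rw [Walk.support_cons, List.mem_cons, hq0]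
        simp only [Walk.length_cons, h0]
        rw [ha]
        constructor
        · rintro (rfl | rfl)
          · exact ⟨0, by omega, by simp⟩
          · exact ⟨1, by omega, by rw [hc_eq]; push_cast; ring_nf⟩
        · rintro ⟨j, hj, rfl⟩
          interval_cases j
          · left; simp
          · right; rw [hc_eq]; push_cast; ring_nf
    · -- q.length ≥ 1 : direction of q must match the first step
      have hed : ε = c - a := by
        by_contra hne2
        have hεn : ε = -(c - a) := by
          rcases hε with rfl | rfl <;> rcases hd' with h' | h' <;>
            first
            | exact absurd h'.symm hne2
            | simp [h']
        have hmem1 : some (c + ε * ((1 : ℕ) : ZMod (2 * k + 1))) ∈ q.support :=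
          (hsup _).mpr ⟨1, hpos, rfl⟩
        have : c + ε * ((1 : ℕ) : ZMod (2 * k + 1)) = a := by
          rw [hεn]; push_cast; ring
        rw [this, ← ha] at hmem1
        exact hnotu hmem1
      refine ⟨ε, hε, ?_, ?_⟩
      · simp only [Walk.length_cons]
        rw [hb', hed]
        push_cast
        ring
      · intro x
        rw [Walk.support_cons, List.mem_cons, hsup x]
        simp only [Walk.length_cons]
        rw [ha]
        constructor
        · rintro (rfl | ⟨j, hj, rfl⟩)
          · exact ⟨0, by omega, by simp⟩
          · refine ⟨j + 1, by omega, ?_⟩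
            rw [hc_eq, hed]
            push_cast
            ring_nf
        · rintro ⟨j, hj, rfl⟩
          cases j with
          | zero => left; simp
          | succ j' =>
            right
            refine ⟨j', by omega, ?_⟩
            rw [hc_eq, hed]
            push_cast
            ring_nf

end RimPath

section HubMem

private lemma even_cycle_hub (k : ℕ) {u : Option (ZMod (2 * k + 1))}
    (C : (oddWheel k).Walk u u) (hC : C.IsCycle) (he : Even C.length) :
    none ∈ C.support := by
  by_contra hn
  have hu : u ≠ none := fun h => hn (h ▸ C.start_mem_support)
  obtain ⟨a, ha⟩ : ∃ a, u = some a := Option.ne_none_iff_exists'.mp hu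
  cases C with
  | nil => exact hC.ne_nil rfl
  | @cons _ w _ h q =>
    have hq : q.IsPath := ((Walk.cons_isCycle_iff q h).mp hC).1
    have hnq : none ∉ q.support := fun hx => hn (by simp [Walk.support_cons, hx])
    have hwn : w ≠ none := fun hw => hnq (hw ▸ q.start_mem_support)
    obtain ⟨c, hwc⟩ : ∃ c, w = some c := Option.ne_none_iff_exists'.mp hwn
    obtain ⟨ε, hε, hba, _⟩ := rim_path_support k q hq hnq hwc ha
    -- adjacency u ~ w gives a - c = ±1
    have hadj := h
    rw [ha, hwc] at hadj
    rcases hadj with ⟨h1, _⟩ | ⟨h1, _⟩ | ⟨i, j, hi, hj, hne, hd⟩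
    · exact absurd h1 (by simp)
    · exact absurd h1 (by simp)
    replace hi : a = i := by injection hi
    replace hj : c = j := by injection hj
    subst hi; subst hj
    -- a = c + ε * L, so ε * L = a - c ∈ {1, -1}; multiply by ε
    have hL : ((q.length : ZMod (2 * k + 1))) = ε * (a - c) := by
      have h2 : ε * ε = 1 := by rcases hε with rfl | rfl <;> ring
      have := congrArg (fun x => ε * (x - c)) hba
      simp only [add_sub_cancel_left] at this
      calc ((q.length : ZMod (2 * k + 1))) = ε * ε * (q.length : ZMod (2 * k + 1)) := by
            rw [h2, one_mul]
        _ = ε * (a - c) := by rw [mul_assoc, ← this]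
    have hd2 : ((q.length : ZMod (2 * k + 1))) = 1 ∨ ((q.length : ZMod (2 * k + 1))) = -1 := by
      rcases hε with rfl | rfl <;> rcases hd with h' | h'
      · left; rw [hL, h', one_mul]
      · right
        rw [hL, one_mul]
        have : a - c = -(c - a) := by ring
        rw [this, h']
      · right
        rw [hL, h', neg_one_mul]
      · left
        rw [hL]
        have : a - c = -(c - a) := by ring
        rw [this, h']
        ring
    have hlen : q.length ≤ 2 * k := rim_path_len k q hq hnq
    have hlen3 : 3 ≤ (Walk.cons h q).length := hC.three_le_length
    rw [Walk.length_cons] at hlen3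
    haveI : Fact (1 < 2 * k + 1) := ⟨by omega⟩
    have hval : q.length = 1 ∨ q.length = 2 * k := by
      rcases hd2 with h' | h'
      · left
        have := congrArg ZMod.val h'
        rwa [ZMod.val_cast_of_lt (by omega), ZMod.val_one] at this
      · right
        have := congrArg ZMod.val h'
        rw [ZMod.val_cast_of_lt (by omega)] at this
        rw [this]
        exact ZMod.val_neg_one (2 * k)
    have hlen0 : (Walk.cons h q).length = q.length + 1 := Walk.length_cons _ _
    rw [hlen0] at he
    rcases he with ⟨m, hm⟩
    omega

end HubMem

section ConformalCore

private lemma conformal_core (k : ℕ) (hk : 1 ≤ k)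
    (C : (oddWheel k).Walk none none) (hC : C.IsCycle) (he : Even C.length) :
    ∃ M : (oddWheel k).Subgraph, M.IsMatching ∧ M.verts = {w | w ∉ C.support} := by
  haveI : Fact (1 < 2 * k + 1) := ⟨by omega⟩
  cases C with
  | nil => exact absurd rfl hC.ne_nil
  | @cons _ x _ h q =>
    have hq : q.IsPath := ((Walk.cons_isCycle_iff q h).mp hC).1
    have hxn : x ≠ none := fun hx => by
      rcases h with ⟨_, h2⟩ | ⟨h1, h2⟩ | ⟨i, j, hi, _, _, _⟩
      · exact h2 hx
      · exact h2 rfl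
      · simp at hi
    obtain ⟨c0, hxc⟩ : ∃ c0, x = some c0 := Option.ne_none_iff_exists'.mp hxn
    -- decompose the reverse of q
    have hne' : (none : Option (ZMod (2 * k + 1))) ≠ x := fun hx => hxn hx.symm
    subst hxc
    obtain ⟨y, h2, s, hrs⟩ := Walk.exists_eq_cons_of_ne (by simp) q.reverse
    have hr : q.reverse.IsPath := hq.reverse
    rw [hrs] at hr
    have hs : s.IsPath := hr.of_cons
    have hns : none ∉ s.support := ((Walk.cons_isPath_iff h2 s).mp hr).2
    have hyn : y ≠ none := fun hy => by
      rcases h2 with ⟨_, h2'⟩ | ⟨h1', h2'⟩ | ⟨i, j, hi, _, _, _⟩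
      · exact h2' hy
      · exact h2' rfl
      · simp at hi
    obtain ⟨b0, hyb⟩ : ∃ b0, y = some b0 := Option.ne_none_iff_exists'.mp hyn
    obtain ⟨ε, hε, hc0, hsup⟩ := rim_path_support k s hs hns hyb rfl
    set L := s.length with hLdef
    have hL2k : L ≤ 2 * k := rim_path_len k s hs hns
    -- length bookkeeping
    have hqlen : q.length = L + 1 := by
      have := congrArg Walk.length hrs
      rw [Walk.length_reverse, Walk.length_cons] at this
      omega
    have hCL : (Walk.cons h q).length = L + 2 := by rw [Walk.length_cons, hqlen]
    have hLeven : Even L := by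
      rw [hCL] at he
      rcases he with ⟨m, hm⟩
      exact ⟨m - 1, by omega⟩
    -- support characterization of the cycle
    have hCsup : ∀ w, w ∈ (Walk.cons h q).support ↔
        (w = none ∨ ∃ j : ℕ, j ≤ L ∧ w = some (b0 + ε * (j : ZMod (2 * k + 1)))) := by
      intro w
      rw [Walk.support_cons, List.mem_cons]
      have hqq : w ∈ q.support ↔ w ∈ q.reverse.support := by
        rw [Walk.support_reverse, List.mem_reverse]
      rw [hqq, hrs, Walk.support_cons, List.mem_cons, hsup w]
      tauto
    -- complement characterization
    have hnin : ∀ (i : ZMod (2 * k + 1)),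
        (some i ∉ (Walk.cons h q).support ↔
          ∃ j : ℕ, L + 1 ≤ j ∧ j ≤ 2 * k ∧ i = b0 + ε * (j : ZMod (2 * k + 1))) := by
      intro i
      rw [hCsup]
      set j0 := (ε * (i - b0)).val with hj0
      have hrep : i = b0 + ε * ((j0 : ℕ) : ZMod (2 * k + 1)) := zmod_rep hε b0 i
      have hj0lt : j0 < 2 * k + 1 := ZMod.val_lt _
      constructor
      · intro hw
        push_neg at hw
        obtain ⟨_, hw2⟩ := hw
        refine ⟨j0, ?_, by omega, hrep⟩
        by_contra hj0L
        exact hw2 j0 (by omega) (by rw [← hrep])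
      · rintro ⟨j, hjL, hj2k, rfl⟩
        rintro (hcon | ⟨j', hj', hj'eq⟩)
        · exact absurd hcon (by simp)
        · have hji : b0 + ε * ((j : ℕ) : ZMod (2 * k + 1)) = b0 + ε * ((j' : ℕ) : ZMod (2 * k + 1)) := by
            injection hj'eq
          have : j = j' := zmod_idx_inj hε b0 (by omega) (by omega) hji
          omega
    have hnone_mem : (none : Option (ZMod (2 * k + 1))) ∈ (Walk.cons h q).support :=
      Walk.start_mem_support _
    -- the pairing involution on the complement
    set S : Set (Option (ZMod (2 * k + 1))) := {w | w ∉ (Walk.cons h q).support} with hSdef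
    have hSmem : ∀ w, w ∈ S ↔
        ∃ j : ℕ, L + 1 ≤ j ∧ j ≤ 2 * k ∧ w = some (b0 + ε * (j : ZMod (2 * k + 1))) := by
      intro w
      cases w with
      | none =>
        simp only [hSdef, Set.mem_setOf_eq]
        constructor
        · intro hw; exact absurd hnone_mem hw
        · rintro ⟨j, _, _, hj⟩; exact absurd hj (by simp)
      | some i =>
        simp only [hSdef, Set.mem_setOf_eq]
        rw [hnin i]
        constructor
        · rintro ⟨j, h1, h2, h3⟩; exact ⟨j, h1, h2, by rw [h3]⟩
        · rintro ⟨j, h1, h2, h3⟩; exact ⟨j, h1, h2, by injection h3⟩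
    set f : Option (ZMod (2 * k + 1)) → Option (ZMod (2 * k + 1)) :=
      fun w => w.elim none (fun i =>
        if Odd ((ε * (i - b0)).val - L) then some (i + ε) else some (i - ε)) with hfdef
    have hfval : ∀ (j : ℕ), L + 1 ≤ j → j ≤ 2 * k →
        f (some (b0 + ε * (j : ZMod (2 * k + 1)))) =
          (if Odd (j - L) then some (b0 + ε * ((j + 1 : ℕ) : ZMod (2 * k + 1)))
           else some (b0 + ε * ((j - 1 : ℕ) : ZMod (2 * k + 1)))) := by
      intro j hj1 hj2
      simp only [hfdef, Option.elim]
      rw [zmod_idx hε b0 j (by omega)]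
      by_cases hodd : Odd (j - L)
      · rw [if_pos hodd, if_pos hodd]
        congr 1
        push_cast
        ring
      · rw [if_neg hodd, if_neg hodd]
        congr 1
        have hj1' : 1 ≤ j := by omega
        push_cast [Nat.cast_sub hj1']
        ring
    -- parity bounds: j - L is between 1 and 2k - L, and 2k - L is even
    have h2kL : Even (2 * k - L) := by
      rcases hLeven with ⟨m, hm⟩
      exact ⟨k - m, by omega⟩
    have hmem : ∀ w ∈ S, f w ∈ S := by
      intro w hw
      obtain ⟨j, hj1, hj2, rfl⟩ := (hSmem w).mp hw
      rw [hfval j hj1 hj2]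
      by_cases hodd : Odd (j - L)
      · rw [if_pos hodd]
        refine (hSmem _).mpr ⟨j + 1, by omega, ?_, rfl⟩
        -- j < 2k since j - L is odd and 2k - L is even
        rcases hodd with ⟨t, ht⟩
        rcases h2kL with ⟨m, hm⟩
        omega
      · rw [if_neg hodd]
        have hodd' : Even (j - L) := Nat.not_odd_iff_even.mp hodd
        refine (hSmem _).mpr ⟨j - 1, ?_, by omega, rfl⟩
        rcases hodd' with ⟨t, ht⟩
        omega
    have hinv : ∀ w ∈ S, f (f w) = w := by
      intro w hw
      obtain ⟨j, hj1, hj2, rfl⟩ := (hSmem w).mp hw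
      rw [hfval j hj1 hj2]
      by_cases hodd : Odd (j - L)
      · rw [if_pos hodd]
        have hj2' : j + 1 ≤ 2 * k := by
          rcases hodd with ⟨t, ht⟩
          rcases h2kL with ⟨m, hm⟩
          omega
        rw [hfval (j + 1) (by omega) hj2']
        have : ¬ Odd (j + 1 - L) := by
          rcases hodd with ⟨t, ht⟩
          rw [Nat.not_odd_iff_even]
          exact ⟨t + 1, by omega⟩
        rw [if_neg this]
        rfl
      · rw [if_neg hodd]
        have hodd' : Even (j - L) := Nat.not_odd_iff_even.mp hodd
        have hj1' : L + 1 ≤ j - 1 := by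
          rcases hodd' with ⟨t, ht⟩
          omega
        rw [hfval (j - 1) hj1' (by omega)]
        have : Odd (j - 1 - L) := by
          rcases hodd' with ⟨t, ht⟩
          exact ⟨t - 1, by omega⟩
        rw [if_pos this]
        have hj11 : j - 1 + 1 = j := by omega
        rw [hj11]
    have hadj : ∀ w ∈ S, (oddWheel k).Adj w (f w) := by
      intro w hw
      obtain ⟨j, hj1, hj2, rfl⟩ := (hSmem w).mp hw
      simp only [hfdef, Option.elim]
      by_cases hodd : Odd ((ε * (b0 + ε * (j : ZMod (2 * k + 1)) - b0)).val - L)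
      · rw [if_pos hodd]
        exact oddWheel_adj_step k hk _ hε
      · rw [if_neg hodd]
        have hε' : -ε = 1 ∨ -ε = -1 := by
          rcases hε with rfl | rfl
          · right; rfl
          · left; ring
        have := oddWheel_adj_step k hk (b0 + ε * (j : ZMod (2 * k + 1))) hε'
        rwa [← sub_eq_add_neg] at this
    obtain ⟨M, hM1, hM2, _⟩ := matching_of_involution (oddWheel k) S f hmem hinv hadj
    exact ⟨M, hM1, hM2⟩

end ConformalCore

section PerfectMatchings

private lemma spoke_pm (k : ℕ) (hk : 1 ≤ k) (a : ZMod (2 * k + 1)) :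
    ∃ M : (oddWheel k).Subgraph, M.IsPerfectMatching ∧ M.Adj none (some a) := by
  haveI : Fact (1 < 2 * k + 1) := ⟨by omega⟩
  set f : Option (ZMod (2 * k + 1)) → Option (ZMod (2 * k + 1)) :=
    fun w => w.elim (some a) (fun i =>
      if i = a then none
      else if Odd ((i - a).val) then some (i + 1) else some (i - 1)) with hfdef
  have hbase : ∀ i : ZMod (2 * k + 1), i - a = (((i - a).val : ℕ) : ZMod (2 * k + 1)) :=
    fun i => (ZMod.natCast_rightInverse _).symm
  have hzero : ∀ i : ZMod (2 * k + 1), (i = a ↔ (i - a).val = 0) := by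
    intro i
    rw [ZMod.val_eq_zero, sub_eq_zero]
  have stepup : ∀ (i : ZMod (2 * k + 1)) (j : ℕ), (i - a).val = j → j + 1 < 2 * k + 1 →
      (i + 1 - a).val = j + 1 := by
    intro i j hij hlt
    have hh : i + 1 - a = ((j + 1 : ℕ) : ZMod (2 * k + 1)) := by
      push_cast
      rw [← hij, ← hbase i]
      ring
    rw [hh, ZMod.val_cast_of_lt hlt]
  have stepdown : ∀ (i : ZMod (2 * k + 1)) (j : ℕ), (i - a).val = j → 1 ≤ j →
      (i - 1 - a).val = j - 1 := by
    intro i j hij h1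
    have hjlt : j < 2 * k + 1 := by rw [← hij]; exact ZMod.val_lt _
    have hh : i - 1 - a = ((j - 1 : ℕ) : ZMod (2 * k + 1)) := by
      push_cast [Nat.cast_sub h1]
      rw [← hij, ← hbase i]
      ring
    rw [hh, ZMod.val_cast_of_lt (by omega)]
  have hfnone : f none = some a := rfl
  have hfsome : ∀ i : ZMod (2 * k + 1), f (some i) =
      (if i = a then none
       else if Odd ((i - a).val) then some (i + 1) else some (i - 1)) := fun _ => rfl
  have hinv : ∀ w ∈ (Set.univ : Set (Option (ZMod (2 * k + 1)))), f (f w) = w := by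
    rintro w -
    cases w with
    | none =>
      rw [hfnone, hfsome, if_pos rfl]
    | some i =>
      by_cases hia : i = a
      · subst hia
        rw [hfsome, if_pos rfl, hfnone]
      · have hj0 : (i - a).val ≠ 0 := fun h => hia ((hzero i).mpr h)
        have hjlt : (i - a).val < 2 * k + 1 := ZMod.val_lt _
        by_cases hodd : Odd ((i - a).val)
        · have hjlt' : (i - a).val + 1 < 2 * k + 1 := by
            rcases hodd with ⟨t, ht⟩
            omega
          have hv1 : (i + 1 - a).val = (i - a).val + 1 := stepup i _ rfl hjlt'
          rw [hfsome, if_neg hia, if_pos hodd, hfsome,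
            if_neg (fun h => by rw [(hzero _).mp h] at hv1; omega),
            if_neg (by rw [hv1]; exact Nat.not_odd_iff_even.mpr hodd.add_one),
            add_sub_cancel_right]
        · have heven : Even ((i - a).val) := Nat.not_odd_iff_even.mp hodd
          have h1le : 1 ≤ (i - a).val := by omega
          have hv1 : (i - 1 - a).val = (i - a).val - 1 := stepdown i _ rfl h1le
          have hodd' : Odd ((i - 1 - a).val) := by
            rw [hv1]
            exact Nat.Even.sub_odd h1le heven odd_one
          rw [hfsome, if_neg hia, if_neg hodd, hfsome,
            if_neg (fun h => by
              rw [(hzero _).mp h] at hv1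
              rcases heven with ⟨t, ht⟩
              omega),
            if_pos hodd', sub_add_cancel]
  have hadj : ∀ w ∈ (Set.univ : Set (Option (ZMod (2 * k + 1)))),
      (oddWheel k).Adj w (f w) := by
    rintro w -
    cases w with
    | none =>
      rw [hfnone]
      exact oddWheel_adj_hub k a
    | some i =>
      by_cases hia : i = a
      · subst hia
        rw [hfsome, if_pos rfl]
        exact (oddWheel_adj_hub k _).symm
      · by_cases hodd : Odd ((i - a).val)
        · rw [hfsome, if_neg hia, if_pos hodd]
          exact oddWheel_adj_step k hk i (Or.inl rfl)
        · rw [hfsome, if_neg hia, if_neg hodd]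
          have := oddWheel_adj_step k hk i (Or.inr rfl)
          rwa [← sub_eq_add_neg] at this
  obtain ⟨M, hM1, hM2, hM3⟩ := matching_of_involution (oddWheel k) Set.univ f
    (fun v _ => Set.mem_univ _) hinv hadj
  refine ⟨M, ⟨hM1, fun v => by rw [hM2]; exact Set.mem_univ v⟩, ?_⟩
  have := hM3 none (Set.mem_univ _)
  rwa [hfnone] at this

private lemma rim_pm (k : ℕ) (hk : 1 ≤ k) (a : ZMod (2 * k + 1)) :
    ∃ M : (oddWheel k).Subgraph, M.IsPerfectMatching ∧ M.Adj (some a) (some (a + 1)) := by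
  haveI : Fact (1 < 2 * k + 1) := ⟨by omega⟩
  set f : Option (ZMod (2 * k + 1)) → Option (ZMod (2 * k + 1)) :=
    fun w => w.elim (some (a + 2)) (fun i =>
      if (i - a).val = 0 then some (a + 1)
      else if (i - a).val = 1 then some a
      else if (i - a).val = 2 then none
      else if Odd ((i - a).val) then some (i + 1) else some (i - 1)) with hfdef
  have hbase : ∀ i : ZMod (2 * k + 1), i - a = (((i - a).val : ℕ) : ZMod (2 * k + 1)) :=
    fun i => (ZMod.natCast_rightInverse _).symm
  have hrep : ∀ (i : ZMod (2 * k + 1)) (j : ℕ), (i - a).val = j → i = a + (j : ZMod (2 * k + 1)) := by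
    intro i j hij
    rw [← hij, ← hbase i]
    ring
  have hidx : ∀ j : ℕ, j < 2 * k + 1 → ((a + (j : ZMod (2 * k + 1))) - a).val = j := by
    intro j hj
    rw [add_sub_cancel_left, ZMod.val_cast_of_lt hj]
  have hval0 : ((a : ZMod (2 * k + 1)) - a).val = 0 := by
    rw [sub_self, ZMod.val_zero]
  have hval1 : ((a + 1) - a).val = 1 := by
    have := hidx 1 (by omega)
    simpa using this
  have hval2 : ((a + 2) - a).val = 2 := by
    have := hidx 2 (by omega)
    simpa using this
  have stepup : ∀ (i : ZMod (2 * k + 1)) (j : ℕ), (i - a).val = j → j + 1 < 2 * k + 1 →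
      (i + 1 - a).val = j + 1 := by
    intro i j hij hlt
    have hh : i + 1 - a = ((j + 1 : ℕ) : ZMod (2 * k + 1)) := by
      push_cast
      rw [← hij, ← hbase i]
      ring
    rw [hh, ZMod.val_cast_of_lt hlt]
  have stepdown : ∀ (i : ZMod (2 * k + 1)) (j : ℕ), (i - a).val = j → 1 ≤ j →
      (i - 1 - a).val = j - 1 := by
    intro i j hij h1
    have hjlt : j < 2 * k + 1 := by rw [← hij]; exact ZMod.val_lt _
    have hh : i - 1 - a = ((j - 1 : ℕ) : ZMod (2 * k + 1)) := by
      push_cast [Nat.cast_sub h1]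
      rw [← hij, ← hbase i]
      ring
    rw [hh, ZMod.val_cast_of_lt (by omega)]
  have hfnone : f none = some (a + 2) := rfl
  have hfsome : ∀ i : ZMod (2 * k + 1), f (some i) =
      (if (i - a).val = 0 then some (a + 1)
       else if (i - a).val = 1 then some a
       else if (i - a).val = 2 then none
       else if Odd ((i - a).val) then some (i + 1) else some (i - 1)) := fun _ => rfl
  have hinv : ∀ w ∈ (Set.univ : Set (Option (ZMod (2 * k + 1)))), f (f w) = w := by
    rintro w -
    cases w with
    | none =>
      rw [hfnone, hfsome, if_neg (by omega : ¬ ((a + 2) - a).val = 0),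
        if_neg (by omega : ¬ ((a + 2) - a).val = 1), if_pos hval2]
    | some i =>
      rcases Nat.lt_or_ge ((i - a).val) 3 with hsmall | hbig
      · interval_cases hj : ((i - a).val)
        · have hia : i = a := by simpa using hrep i 0 hj
          rw [hfsome, if_pos hj, hfsome, if_neg (by omega : ¬ ((a + 1) - a).val = 0),
            if_pos hval1, hia]
        · have hia : i = a + 1 := by simpa using hrep i 1 hj
          rw [hfsome, if_neg (by omega), if_pos hj, hfsome, if_pos hval0, hia]
        · have hia : i = a + 2 := by simpa using hrep i 2 hj
          rw [hfsome, if_neg (by omega), if_neg (by omega), if_pos hj, hfnone, hia]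
      · have hjlt : (i - a).val < 2 * k + 1 := ZMod.val_lt _
        by_cases hodd : Odd ((i - a).val)
        · have hjlt' : (i - a).val + 1 < 2 * k + 1 := by
            rcases hodd with ⟨t, ht⟩
            omega
          have hv1 : (i + 1 - a).val = (i - a).val + 1 := stepup i _ rfl hjlt'
          rw [hfsome, if_neg (by omega), if_neg (by omega), if_neg (by omega), if_pos hodd,
            hfsome, if_neg (by omega), if_neg (by omega), if_neg (by omega),
            if_neg (by rw [hv1]; exact Nat.not_odd_iff_even.mpr hodd.add_one),
            add_sub_cancel_right]
        · have heven : Even ((i - a).val) := Nat.not_odd_iff_even.mp hodd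
          have hv1 : (i - 1 - a).val = (i - a).val - 1 := stepdown i _ rfl (by omega)
          have hodd' : Odd ((i - 1 - a).val) := by
            rw [hv1]
            exact Nat.Even.sub_odd (by omega) heven odd_one
          obtain ⟨t, ht⟩ := heven
          rw [hfsome, if_neg (by omega), if_neg (by omega), if_neg (by omega), if_neg hodd,
            hfsome, if_neg (by omega), if_neg (by omega), if_neg (by omega),
            if_pos hodd', sub_add_cancel]
  have hadj : ∀ w ∈ (Set.univ : Set (Option (ZMod (2 * k + 1)))),
      (oddWheel k).Adj w (f w) := by
    rintro w -
    cases w with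
    | none =>
      rw [hfnone]
      exact oddWheel_adj_hub k _
    | some i =>
      rcases Nat.lt_or_ge ((i - a).val) 3 with hsmall | hbig
      · interval_cases hj : ((i - a).val)
        · have hia : i = a := by simpa using hrep i 0 hj
          rw [hfsome, if_pos hj, hia]
          exact oddWheel_adj_step k hk a (Or.inl rfl)
        · have hia : i = a + 1 := by simpa using hrep i 1 hj
          rw [hfsome, if_neg (by omega), if_pos hj]
          have h2 := oddWheel_adj_step k hk i (Or.inr rfl)
          rw [← sub_eq_add_neg] at h2
          have : i - 1 = a := by rw [hia]; ring
          rwa [this] at h2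
        · rw [hfsome, if_neg (by omega), if_neg (by omega), if_pos hj]
          exact Or.inr (Or.inl ⟨rfl, by simp⟩)
      · by_cases hodd : Odd ((i - a).val)
        · rw [hfsome, if_neg (by omega), if_neg (by omega), if_neg (by omega), if_pos hodd]
          exact oddWheel_adj_step k hk i (Or.inl rfl)
        · rw [hfsome, if_neg (by omega), if_neg (by omega), if_neg (by omega), if_neg hodd]
          have h2 := oddWheel_adj_step k hk i (Or.inr rfl)
          rwa [← sub_eq_add_neg] at h2
  obtain ⟨M, hM1, hM2, hM3⟩ := matching_of_involution (oddWheel k) Set.univ f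
    (fun v _ => Set.mem_univ _) hinv hadj
  refine ⟨M, ⟨hM1, fun v => by rw [hM2]; exact Set.mem_univ v⟩, ?_⟩
  have := hM3 (some a) (Set.mem_univ _)
  rwa [hfsome, if_pos hval0] at this

end PerfectMatchings

section ClosedWalk

private lemma closed_mem_support_iff {W : Type*} {G : SimpleGraph W} {v : W}
    (p : G.Walk v v) (hp : p ≠ Walk.nil) (w : W) :
    w ∈ p.support ↔ w ∈ p.support.tail := by
  cases p with
  | nil => exact absurd rfl hp
  | cons h q =>
    rw [Walk.support_cons]
    simp only [List.tail_cons, List.mem_cons]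
    constructor
    · rintro (rfl | hq')
      · exact q.end_mem_support
      · exact hq'
    · intro h'
      exact Or.inr h'

end ClosedWalk

/-- Every odd wheel is cycle-extendable: for every `k ≥ 1`, the odd
wheel `W_{2k+1}` is a matching covered graph in which every even cycle is conformal. -/
theorem oddWheel_matchingCovered_and_cycleExtendable (k : ℕ) (hk : 1 ≤ k) :
    MatchingCovered (oddWheel k) ∧ CycleExtendable (oddWheel k) := by
  haveI : Fact (1 < 2 * k + 1) := ⟨by omega⟩
  constructor
  · refine ⟨?_, ?_, ?_⟩
    · -- connected
      have hreach : ∀ w, (oddWheel k).Reachable none w := by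
        intro w
        cases w with
        | none => exact Reachable.refl _
        | some i => exact (oddWheel_adj_hub k i).reachable
      exact ((oddWheel k).connected_iff).mpr
        ⟨fun u v => (hreach u).symm.trans (hreach v), ⟨none⟩⟩
    · -- nontrivial
      exact ⟨none, some 0, by simp⟩
    · -- every edge is in a perfect matching
      intro e he
      revert he
      induction e using Sym2.ind with
      | _ x y =>
        intro he
        rw [mem_edgeSet] at he
        rcases he with ⟨hx, hy⟩ | ⟨hy, hx⟩ | ⟨i, j, hi, hj, hij, hd⟩
        · subst hx
          obtain ⟨a, rfl⟩ : ∃ a, y = some a := Option.ne_none_iff_exists'.mp hy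
          obtain ⟨M, hM1, hM2⟩ := spoke_pm k hk a
          exact ⟨M, hM1, Subgraph.mem_edgeSet.mpr hM2⟩
        · subst hy
          obtain ⟨a, rfl⟩ : ∃ a, x = some a := Option.ne_none_iff_exists'.mp hx
          obtain ⟨M, hM1, hM2⟩ := spoke_pm k hk a
          refine ⟨M, hM1, ?_⟩
          rw [Sym2.eq_swap]
          exact Subgraph.mem_edgeSet.mpr hM2
        · subst hi; subst hj
          rcases hd with hd | hd
          · -- i - j = 1, so i = j + 1
            have hij' : i = j + 1 := by
              rw [← hd]; ring
            obtain ⟨M, hM1, hM2⟩ := rim_pm k hk j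
            refine ⟨M, hM1, ?_⟩
            rw [Sym2.eq_swap, hij']
            exact Subgraph.mem_edgeSet.mpr hM2
          · -- j - i = 1, so j = i + 1
            have hij' : j = i + 1 := by
              rw [← hd]; ring
            obtain ⟨M, hM1, hM2⟩ := rim_pm k hk i
            refine ⟨M, hM1, ?_⟩
            rw [hij']
            exact Subgraph.mem_edgeSet.mpr hM2
  · -- cycle-extendable
    intro u C hC he
    have hhub : none ∈ C.support := even_cycle_hub k C hC he
    have hC' : (C.rotate none hhub).IsCycle := hC.rotate hhub
    have hlen : (C.rotate none hhub).length = C.length := by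
      have h1 := (C.rotate_darts none hhub).perm.length_eq
      rwa [Walk.length_darts, Walk.length_darts] at h1
    have he' : Even (C.rotate none hhub).length := by rw [hlen]; exact he
    obtain ⟨M, hM1, hM2⟩ := conformal_core k hk (C.rotate none hhub) hC' he'
    refine ⟨M, hM1, ?_⟩
    rw [hM2]
    have hsupp : ∀ w, w ∈ (C.rotate none hhub).support ↔ w ∈ C.support := by
      intro w
      rw [closed_mem_support_iff _ hC'.ne_nil, closed_mem_support_iff _ hC.ne_nil]
      exact (C.support_rotate none hhub).perm.mem_iff
    ext w
    simp only [Set.mem_setOf_eq]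
    rw [hsupp w]
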